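/- Let f be a homeomorphism of a compact metric space (X,d). If f is expansive and has the shadowing property, then f has the L-shadowing property. -/

import Mathlib

open Metric Filter Set

variable {X : Type*} [MetricSpace X]

/-- The iterate of a homeomorphism by an integer power. -/
def hIter (f : X ≃ₜ X) (k : ℤ) (x : X) : X := (f.toEquiv ^ k) x

/-- The local stable set of `x` of size `c`:
points whose forward iterates stay `c`-close to those of `x`. -/
def localStable (f : X ≃ₜ X) (c : ℝ) (x : X) : Set X :=
  {y | ∀ k : ℕ, dist ((⇑f)^[k] y) ((⇑f)^[k] x) ≤ c}

/-- The local unstable set of `x` of size `c`: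
points whose backward iterates stay `c`-close to those of `x`. -/
def localUnstable (f : X ≃ₜ X) (c : ℝ) (x : X) : Set X :=
  {y | ∀ k : ℕ, dist ((⇑f.symm)^[k] y) ((⇑f.symm)^[k] x) ≤ c}

/-- The stable set of `x`. -/
def stableSet (f : X ≃ₜ X) (x : X) : Set X :=
  {y | Tendsto (fun k : ℕ => dist ((⇑f)^[k] y) ((⇑f)^[k] x)) atTop (nhds 0)}

/-- The unstable set of `x`. -/
def unstableSet (f : X ≃ₜ X) (x : X) : Set X :=
  {y | Tendsto (fun k : ℕ => dist ((⇑f.symm)^[k] y) ((⇑f.symm)^[k] x)) atTop (nhds 0)}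

/-- `f` is positively `n`-expansive: for some `c > 0` every local stable set of
size `c` contains at most `n` points. -/
def PosNExpansive (f : X ≃ₜ X) (n : ℕ) : Prop :=
  ∃ c > 0, ∀ x : X, ∀ S : Finset X, ↑S ⊆ localStable f c x → S.card ≤ n

/-- `f` is `n`-expansive: for some `c > 0` every dynamical ball of size `c`
contains at most `n` points. -/
def NExpansive (f : X ≃ₜ X) (n : ℕ) : Prop :=
  ∃ c > 0, ∀ x : X, ∀ S : Finset X,
    ↑S ⊆ localStable f c x ∩ localUnstable f c x → S.card ≤ n

/-- `f` is expansive. -/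
def Expansive (f : X ≃ₜ X) : Prop :=
  ∃ c > 0, ∀ x y : X, (∀ k : ℤ, dist (hIter f k x) (hIter f k y) ≤ c) → x = y

/-- `(x_k)_{k ∈ ℤ}` is a `δ`-pseudo-orbit. -/
def IsPseudoOrbit (f : X ≃ₜ X) (δ : ℝ) (x : ℤ → X) : Prop :=
  ∀ k : ℤ, dist (f (x k)) (x (k + 1)) < δ

/-- `(x_k)_{k ∈ ℤ}` is a two-sided limit pseudo-orbit:
`d(f(x_k), x_{k+1}) → 0` as `|k| → ∞`. -/
def IsTwoSidedLimitPseudoOrbit (f : X ≃ₜ X) (x : ℤ → X) : Prop :=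
  Tendsto (fun k : ℤ => dist (f (x k)) (x (k + 1))) cofinite (nhds 0)

/-- `z` `ε`-shadows the sequence `(x_k)_{k ∈ ℤ}`. -/
def Shadows (f : X ≃ₜ X) (ε : ℝ) (z : X) (x : ℤ → X) : Prop :=
  ∀ k : ℤ, dist (hIter f k z) (x k) < ε

/-- `z` two-sided limit shadows `(x_k)_{k ∈ ℤ}`. -/
def TwoSidedLimitShadows (f : X ≃ₜ X) (z : X) (x : ℤ → X) : Prop :=
  Tendsto (fun k : ℤ => dist (hIter f k z) (x k)) cofinite (nhds 0)

/-- The shadowing property. -/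
def ShadowingProperty (f : X ≃ₜ X) : Prop :=
  ∀ ε > 0, ∃ δ > 0, ∀ x : ℤ → X, IsPseudoOrbit f δ x → ∃ z : X, Shadows f ε z x

/-- The L-shadowing property. -/
def LShadowingProperty (f : X ≃ₜ X) : Prop :=
  ∀ ε > 0, ∃ δ > 0, ∀ x : ℤ → X, IsPseudoOrbit f δ x →
    IsTwoSidedLimitPseudoOrbit f x →
    ∃ z : X, Shadows f ε z x ∧ TwoSidedLimitShadows f z x

/-- Topological transitivity. -/
def TopTransitive (f : X ≃ₜ X) : Prop :=
  ∀ U V : Set X, IsOpen U → IsOpen V → U.Nonempty → V.Nonempty →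
    ∃ k : ℕ, ((⇑f)^[k] '' U ∩ V).Nonempty

/-- There is a nontrivial finite `ε`-pseudo-orbit from `x` to `y`. -/
def ChainFrom (f : X ≃ₜ X) (ε : ℝ) (x y : X) : Prop :=
  ∃ (l : ℕ) (c : ℕ → X), 0 < l ∧ c 0 = x ∧ c l = y ∧
    ∀ k < l, dist (f (c k)) (c (k + 1)) < ε

/-- `x` is a chain recurrent point of `f`. -/
def ChainRecurrent (f : X ≃ₜ X) (x : X) : Prop :=
  ∀ ε > 0, ChainFrom f ε x x

/-- The chain recurrent class of `x`. -/
def chainClass (f : X ≃ₜ X) (x : X) : Set X :=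
  {y | ∀ ε > 0, ChainFrom f ε x y ∧ ChainFrom f ε y x}

/-- `x` is a periodic point of `f`. -/
def Periodic (f : X ≃ₜ X) (x : X) : Prop :=
  ∃ k : ℕ, 1 ≤ k ∧ (⇑f)^[k] x = x

/-- `x` is a non-wandering point of `f`. -/
def NonWandering (f : X ≃ₜ X) (x : X) : Prop :=
  ∀ U : Set X, IsOpen U → x ∈ U → ∃ k : ℕ, 0 < k ∧ ((⇑f)^[k] '' U ∩ U).Nonempty

/-- The omega limit set of `x`: accumulation points of the forward orbit. -/
def omegaLimitSet (f : X ≃ₜ X) (x : X) : Set X :=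
  {y | ∃ φ : ℕ → ℕ, StrictMono φ ∧ Tendsto (fun n => (⇑f)^[φ n] x) atTop (nhds y)}

/-- `z` two-sided limit shadows `(x_k)` with gap `K`. -/
def TwoSidedLimitShadowsWithGap (f : X ≃ₜ X) (K : ℤ) (z : X) (x : ℤ → X) : Prop :=
  Tendsto (fun k : ℤ => dist (hIter f k z) (x k)) atBot (nhds 0) ∧
  Tendsto (fun k : ℤ => dist (hIter f (K + k) z) (x k)) atTop (nhds 0)

lemma hIter_add (f : X ≃ₜ X) (m n : ℤ) (x : X) :
    hIter f (m + n) x = hIter f m (hIter f n x) := by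
  simp [hIter, zpow_add, Equiv.Perm.mul_apply]

lemma hIter_zero (f : X ≃ₜ X) (x : X) : hIter f 0 x = x := by
  simp [hIter]

lemma hIter_one (f : X ≃ₜ X) (x : X) : hIter f 1 x = f x := by
  simp [hIter]

lemma hIter_neg_one (f : X ≃ₜ X) (x : X) : hIter f (-1) x = f.symm x := by
  simp only [hIter, zpow_neg_one]
  rfl

lemma continuous_hIter (f : X ≃ₜ X) (m : ℤ) : Continuous (hIter f m) := by
  induction m using Int.induction_on with
  | zero => simpa [funext (hIter_zero f)] using continuous_id'
  | succ n ih =>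
      have h : (hIter f (n + 1) : X → X) = f ∘ hIter f n := by
        funext x
        rw [add_comm, hIter_add, hIter_one]; rfl
      rw [h]
      exact f.continuous.comp ih
  | pred n ih =>
      have h : (hIter f (-n - 1) : X → X) = f.symm ∘ hIter f (-n) := by
        funext x
        rw [show (-(n : ℤ) - 1) = -1 + -n by ring, hIter_add, hIter_neg_one]; rfl
      rw [h]
      exact f.symm.continuous.comp ih

lemma hIter_orbit (f : X ≃ₜ X) (y : ℤ → X) (h : ∀ j : ℤ, f (y j) = y (j + 1)) :
    ∀ j : ℤ, y j = hIter f j (y 0) := by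
  intro j
  induction j using Int.induction_on with
  | zero => rw [hIter_zero]
  | succ n ih =>
      rw [← h n, ih, show ((n : ℤ) + 1) = 1 + n by ring, hIter_add, hIter_one]
  | pred n ih =>
      have h2 := h (-(n : ℤ) - 1)
      rw [show (-(n : ℤ) - 1 + 1) = -n by ring] at h2
      have : y (-(n : ℤ) - 1) = f.symm (y (-(n : ℤ))) := by
        rw [← h2]; simp
      rw [this, ih, show (-(n : ℤ) - 1) = -1 + -n by ring, hIter_add, hIter_neg_one]

theorem stmt10 {X : Type*} [MetricSpace X] [CompactSpace X] (f : X ≃ₜ X)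
    (hexp : Expansive f) (hshad : ShadowingProperty f) :
    LShadowingProperty f := by
  obtain ⟨c, hc, hcexp⟩ := hexp
  intro ε hε
  have hε₀ : (0 : ℝ) < min ε c := lt_min hε hc
  obtain ⟨δ, hδ, hδshad⟩ := hshad (min ε c) hε₀
  refine ⟨δ, hδ, fun x hpo hlpo => ?_⟩
  obtain ⟨z, hz⟩ := hδshad x hpo
  refine ⟨z, fun k => lt_of_lt_of_le (hz k) (min_le_left _ _), ?_⟩
  -- Key finiteness claim
  have key : ∀ a > (0 : ℝ), {k : ℤ | a ≤ dist (hIter f k z) (x k)}.Finite := by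
    intro a ha
    by_contra hinf
    replace hinf : Set.Infinite {k : ℤ | a ≤ dist (hIter f k z) (x k)} := hinf
    set k : ℕ → ℤ := fun n => (hinf.natEmbedding _ n : ℤ) with hkdef
    have hkinj : Function.Injective k := fun m n h =>
      (hinf.natEmbedding _).injective (Subtype.ext h)
    have hkmem : ∀ n, a ≤ dist (hIter f (k n) z) (x (k n)) := fun n =>
      (hinf.natEmbedding _ n).2
    -- compactness: extract a convergent subsequence of shifted data
    let u : ℕ → X × (ℤ → X) := fun n => (hIter f (k n) z, fun j => x (k n + j))
    obtain ⟨⟨p, y⟩, -, φ, hφ, hlim⟩ :=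
      IsCompact.tendsto_subseq (isCompact_univ (X := X × (ℤ → X)))
        (fun n => Set.mem_univ (u n))
    have hp : Tendsto (fun n => hIter f (k (φ n)) z) atTop (nhds p) :=
      (continuous_fst.tendsto _).comp hlim
    have hy : ∀ j : ℤ, Tendsto (fun n => x (k (φ n) + j)) atTop (nhds (y j)) := by
      intro j
      have h2 : Tendsto (fun n => (u (φ n)).2) atTop (nhds y) :=
        (continuous_snd.tendsto _).comp hlim
      exact tendsto_pi_nhds.mp h2 j
    have hkφ : ∀ j : ℤ, Tendsto (fun n => k (φ n) + j) atTop cofinite := by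
      intro j
      have hinj : Function.Injective (fun n => k (φ n) + j) := by
        intro m n h
        simp only [add_left_inj] at h
        exact hφ.injective (hkinj h)
      exact Nat.cofinite_eq_atTop ▸ hinj.tendsto_cofinite
    -- y is a true orbit
    have horbit : ∀ j : ℤ, f (y j) = y (j + 1) := by
      intro j
      have h1 : Tendsto (fun n => dist (f (x (k (φ n) + j))) (x (k (φ n) + j + 1)))
          atTop (nhds 0) := hlpo.comp (hkφ j)
      have h2 : Tendsto (fun n => dist (f (x (k (φ n) + j))) (x (k (φ n) + (j + 1))))
          atTop (nhds (dist (f (y j)) (y (j + 1)))) :=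
        ((f.continuous.tendsto _).comp (hy j)).dist (hy (j + 1))
      have h3 : dist (f (y j)) (y (j + 1)) = 0 := by
        refine tendsto_nhds_unique ?_ h1
        simpa [← add_assoc] using h2
      exact dist_eq_zero.mp h3
    have hyiter := hIter_orbit f y horbit
    -- distance bound along the whole orbit
    have hbound : ∀ j : ℤ, dist (hIter f j p) (y j) ≤ min ε c := by
      intro j
      have hzt : Tendsto (fun n => hIter f j (hIter f (k (φ n)) z)) atTop
          (nhds (hIter f j p)) := ((continuous_hIter f j).tendsto _).comp hp
      have heq : ∀ n, hIter f j (hIter f (k (φ n)) z) = hIter f (k (φ n) + j) z := by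
        intro n
        rw [add_comm, hIter_add]
      have hd : Tendsto (fun n => dist (hIter f (k (φ n) + j) z) (x (k (φ n) + j)))
          atTop (nhds (dist (hIter f j p) (y j))) := by
        have := hzt.dist (hy j)
        simpa only [heq] using this
      exact le_of_tendsto hd (Eventually.of_forall fun n => (hz _).le)
    -- expansivity: p = y 0
    have hpy : p = y 0 := by
      apply hcexp p (y 0)
      intro j
      have := hbound j
      rw [hyiter j] at this
      exact this.trans (min_le_right ε c)
    -- contradiction
    have hd0 : Tendsto (fun n => dist (hIter f (k (φ n)) z) (x (k (φ n)))) atTop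
        (nhds (dist p (y 0))) := by
      have := hp.dist (hy 0)
      simpa using this
    have hge : a ≤ dist p (y 0) :=
      ge_of_tendsto hd0 (Eventually.of_forall fun n => hkmem (φ n))
    rw [hpy, dist_self] at hge
    exact absurd hge (not_le.mpr ha)
  -- conclude the tendsto from the finiteness claim
  rw [TwoSidedLimitShadows, Metric.tendsto_nhds]
  intro a ha
  rw [Filter.eventually_cofinite]
  refine (key a ha).subset ?_
  intro kk hkk
  simp only [Real.dist_eq, sub_zero, not_lt, Set.mem_setOf_eq] at hkk ⊢
  rwa [abs_of_nonneg dist_nonneg] at hkk
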